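/- Let H be a complex Hilbert space, let Q ∈ B(H) be a positive self-adjoint operator, set P := Q², and let V₁, …, Vₙ ∈ B(H) satisfy ‖V₁x‖² + ⋯ + ‖Vₙx‖² ≤ ‖x‖² for all x ∈ H. Suppose the operators Tᵢ := VᵢP pairwise commute and P² = T₁*T₁ + ⋯ + Tₙ*Tₙ. If either the n-tuple (T₁, …, Tₙ) or the n-tuple (QV₁Q, …, QVₙQ) is jointly bounded below, then P is invertible in B(H). (Theorem 'basic': left invertibility of T or of its spherical Aluthge transform implies invertibility of P.) -/

import Mathlib

open ContinuousLinearMap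
open scoped NNReal

private lemma aux_isUnit {H : Type*} [NormedAddCommGroup H] [InnerProductSpace ℂ H]
    [CompleteSpace H] (T : H →L[ℂ] H) (hsa : IsSelfAdjoint T) {c : ℝ} (hc : 0 < c)
    (h : ∀ x : H, c * ‖x‖ ≤ ‖T x‖) : IsUnit T := by
  rw [isUnit_iff_bijective, bijective_iff_dense_range_and_antilipschitz]
  have h_anti : AntilipschitzWith ((⟨c, hc.le⟩ : ℝ≥0))⁻¹ T := by
    refine T.antilipschitz_of_bound fun x ↦ ?_
    change ‖x‖ ≤ (c⁻¹ : ℝ) * ‖T x‖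
    rw [inv_mul_eq_div, le_div_iff₀ (by exact_mod_cast hc)]
    simpa [mul_comm] using h x
  refine ⟨?_, ⟨_, h_anti⟩⟩
  rw [Submodule.topologicalClosure_eq_top_iff, Submodule.eq_bot_iff]
  intro x hx
  have hadj : ContinuousLinearMap.adjoint T = T := hsa
  have h1 : (inner ℂ (T (T x)) x : ℂ) = 0 := hx _ ⟨T x, rfl⟩
  have h2 : (inner ℂ (T x) (T x) : ℂ) = 0 := by
    have h3 := T.adjoint_inner_left x (T x)
    rw [hadj] at h3
    rw [← h3]; exact h1
  have hTx : T x = 0 := inner_self_eq_zero.mp h2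
  have hle := h x
  rw [hTx, norm_zero] at hle
  have hx0 : ‖x‖ ≤ 0 := by nlinarith
  exact norm_le_zero_iff.mp hx0

/-- Theorem `basic`: With `Q` positive, `P := Q²`, `∑ i, ‖Vᵢ x‖² ≤ ‖x‖²`,
the operators `Tᵢ := VᵢP` pairwise commuting, and `P² = ∑ i, Tᵢ* Tᵢ`: if either
`(T₁, …, Tₙ)` or `(QV₁Q, …, QVₙQ)` is jointly bounded below, then `P` is invertible. -/
theorem isUnit_of_jointly_bounded_below_or_sphericalAluthge
    {H : Type*} [NormedAddCommGroup H] [InnerProductSpace ℂ H] [CompleteSpace H]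
    {n : ℕ} (Q : H →L[ℂ] H) (V : Fin n → H →L[ℂ] H)
    (hQ : Q.IsPositive)
    (hV : ∀ x : H, ∑ i, ‖V i x‖ ^ 2 ≤ ‖x‖ ^ 2)
    (hT : ∀ i j, Commute (V i * (Q * Q)) (V j * (Q * Q)))
    (hP2 : (Q * Q) * (Q * Q) =
      ∑ i, ContinuousLinearMap.adjoint (V i * (Q * Q)) * (V i * (Q * Q)))
    (hbb : (∃ c : ℝ, 0 < c ∧ ∀ x : H, c ^ 2 * ‖x‖ ^ 2 ≤ ∑ i, ‖(V i * (Q * Q)) x‖ ^ 2) ∨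
      (∃ c : ℝ, 0 < c ∧ ∀ x : H, c ^ 2 * ‖x‖ ^ 2 ≤ ∑ i, ‖(Q * V i * Q) x‖ ^ 2)) :
    IsUnit (Q * Q) := by
  have hQsa : IsSelfAdjoint Q := hQ.isSelfAdjoint
  rcases hbb with ⟨c, hc, hb⟩ | ⟨c, hc, hb⟩
  · have hPsa : IsSelfAdjoint (Q * Q) := by
      rw [IsSelfAdjoint, star_mul, hQsa.star_eq]
    refine aux_isUnit (Q * Q) hPsa hc fun x ↦ ?_
    have key : c ^ 2 * ‖x‖ ^ 2 ≤ ‖(Q * Q) x‖ ^ 2 := by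
      refine (hb x).trans ?_
      simpa [mul_apply] using hV ((Q * Q) x)
    nlinarith [norm_nonneg ((Q * Q) x), norm_nonneg x,
      mul_nonneg hc.le (norm_nonneg x)]
  · by_cases hQz : Q = 0
    · have hzero : ∀ x : H, x = 0 := by
        intro x
        have := hb x
        simp [hQz] at this
        have hx2 : ‖x‖ ^ 2 = 0 := le_antisymm (by nlinarith [pow_pos hc 2]) (sq_nonneg _)
        simpa [sq] using hx2
      have : (Q * Q) = 1 := by
        ext x
        rw [hzero ((Q * Q) x)]
        exact (hzero ((1 : H →L[ℂ] H) x)).symm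
      rw [this]; exact isUnit_one
    · have hQn : 0 < ‖Q‖ := norm_pos_iff.mpr hQz
      have key : ∀ x : H, c / ‖Q‖ * ‖x‖ ≤ ‖Q x‖ := by
        intro x
        have h1 : ∑ i, ‖(Q * V i * Q) x‖ ^ 2 ≤ ‖Q‖ ^ 2 * ∑ i, ‖V i (Q x)‖ ^ 2 := by
          rw [Finset.mul_sum]
          refine Finset.sum_le_sum fun i _ ↦ ?_
          have := Q.le_opNorm (V i (Q x))
          have hni : ‖(Q * V i * Q) x‖ = ‖Q (V i (Q x))‖ := by simp [mul_apply]
          rw [hni]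
          nlinarith [norm_nonneg (V i (Q x)), norm_nonneg (Q (V i (Q x)))]
        have h2 : ‖Q‖ ^ 2 * ∑ i, ‖V i (Q x)‖ ^ 2 ≤ ‖Q‖ ^ 2 * ‖Q x‖ ^ 2 :=
          mul_le_mul_of_nonneg_left (hV (Q x)) (by positivity)
        have h3 : c ^ 2 * ‖x‖ ^ 2 ≤ ‖Q‖ ^ 2 * ‖Q x‖ ^ 2 := ((hb x).trans h1).trans h2
        rw [div_mul_eq_mul_div, div_le_iff₀ hQn]
        nlinarith [norm_nonneg (Q x), norm_nonneg x, mul_nonneg hc.le (norm_nonneg x),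
          mul_nonneg (norm_nonneg (Q x)) hQn.le]
      have hQu : IsUnit Q := aux_isUnit Q hQsa (div_pos hc hQn) key
      exact hQu.mul hQu
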